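/- Let V be a finite-dimensional real vector space and T : V → V a linear automorphism whose only complex eigenvalue is 1 (i.e. the characteristic polynomial of T is (t−1)^{dim V}). Suppose S is a finite set of nonzero vectors spanning V such that for each s ∈ S there exist s' ∈ S and a real λ > 0 with T(s) = λ s'. Then T is the identity map on V. -/

import Mathlib

open Polynomial

section Aux

variable {V : Type*} [AddCommGroup V] [Module ℝ V]

/-- `X` divides `(X+1)^m - 1`. -/
lemma aux_Xdvd (m : ℕ) : (X : ℝ[X]) ∣ ((X + 1) ^ m - 1) := by
  rw [X_dvd_iff]
  simp [coeff_X_add_one_pow]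

/-- If `(T-1)^n = 0` then `(T^m - 1)^n = 0`. -/
lemma aux_nilp (T : Module.End ℝ V) (n : ℕ) (hN : (T - 1) ^ n = 0) (m : ℕ) :
    (T ^ m - 1) ^ n = 0 := by
  set N : Module.End ℝ V := T - 1 with hNdef
  have hT : N + 1 = T := by rw [hNdef]; abel
  obtain ⟨q, hq⟩ := aux_Xdvd m
  have haev : (aeval N) ((X + 1 : ℝ[X]) ^ m - 1) = T ^ m - 1 := by
    simp [hT]
  calc (T ^ m - 1) ^ n = (aeval N) (((X + 1 : ℝ[X]) ^ m - 1) ^ n) := by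
        rw [map_pow, haev]
    _ = 0 := by rw [hq, mul_pow, map_mul, map_pow, aeval_X, hN, zero_mul]

/-- Eigenvalue of a nilpotent endomorphism is zero. -/
lemma aux_eigen (M : Module.End ℝ V) (n : ℕ) (hM : M ^ n = 0) (v : V) (hv : v ≠ 0)
    (d : ℝ) (h : M v = d • v) : d = 0 := by
  have key : ∀ j, (M ^ j) v = d ^ j • v := by
    intro j
    induction j with
    | zero => simp
    | succ j ih =>
      rw [pow_succ, pow_succ, Module.End.mul_apply, h, map_smul, ih, smul_smul, mul_comm]
  have h0 : d ^ n • v = 0 := by rw [← key, hM, LinearMap.zero_apply]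
  rcases smul_eq_zero.mp h0 with h' | h'
  · by_contra hd
    exact pow_ne_zero n hd h'
  · exact absurd h' hv

/-- If `c • N v = (N² · p(N)) v` with `N` nilpotent and `c ≠ 0`, then `N v = 0`. -/
lemma aux_key (N : Module.End ℝ V) (p : ℝ[X]) (n : ℕ) (hN : N ^ n = 0) (c : ℝ) (hc : c ≠ 0)
    (v : V) (hv : c • N v = ((aeval N) ((X * X) * p)) v) : N v = 0 := by
  have key : ∀ j, c ^ j • N v = ((aeval N) ((X : ℝ[X]) ^ (j + 1) * p ^ j)) v := by
    intro j
    induction j with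
    | zero => simp
    | succ j ih =>
      have e1 : (X : ℝ[X]) ^ (j + 1) * p ^ j = (X ^ j * p ^ j) * X := by ring
      have e2 : (X : ℝ[X]) ^ j * p ^ j * ((X * X) * p) = X ^ (j + 1 + 1) * p ^ (j + 1) := by
        ring
      calc c ^ (j + 1) • N v = c • (c ^ j • N v) := by
            rw [pow_succ, mul_comm, mul_smul]
        _ = c • ((aeval N) ((X : ℝ[X]) ^ (j + 1) * p ^ j)) v := by rw [ih]
        _ = ((aeval N) ((X : ℝ[X]) ^ j * p ^ j)) (c • N v) := by
            rw [e1, map_mul, aeval_X, Module.End.mul_apply, map_smul]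
        _ = ((aeval N) ((X : ℝ[X]) ^ j * p ^ j)) (((aeval N) ((X * X) * p)) v) := by rw [hv]
        _ = ((aeval N) ((X : ℝ[X]) ^ (j + 1 + 1) * p ^ (j + 1))) v := by
            rw [← Module.End.mul_apply, ← map_mul, e2]
  have hz : ((aeval N) ((X : ℝ[X]) ^ (n + 1) * p ^ n)) v = 0 := by
    have e : (X : ℝ[X]) ^ (n + 1) * p ^ n = (X * p ^ n) * X ^ n := by ring
    rw [e, map_mul, map_pow, aeval_X, hN, mul_zero, LinearMap.zero_apply]
  have h0 : c ^ n • N v = 0 := by rw [key n, hz]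
  rcases smul_eq_zero.mp h0 with h' | h'
  · exact absurd h' (pow_ne_zero n hc)
  · exact h'

end Aux

theorem stmt_6 {V : Type*} [AddCommGroup V] [Module ℝ V] [FiniteDimensional ℝ V]
    (T : V →ₗ[ℝ] V) (hTbij : Function.Bijective T)
    (hchar : T.charpoly = (Polynomial.X - 1) ^ (Module.finrank ℝ V))
    (S : Finset V) (hS0 : (0 : V) ∉ S) (hSspan : Submodule.span ℝ (S : Set V) = ⊤)
    (hperm : ∀ s ∈ S, ∃ s' ∈ S, ∃ l : ℝ, 0 < l ∧ T s = l • s') :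
    T = LinearMap.id := by
  set n := Module.finrank ℝ V with hn
  -- Cayley–Hamilton: (T - 1)^n = 0
  have hCH := T.aeval_self_charpoly
  rw [hchar] at hCH
  have hN : (T - 1) ^ n = 0 := by
    simpa [map_pow, map_sub] using hCH
  -- choice of the permutation-like map
  choose g hgS l hl hTl using hperm
  set G : {x // x ∈ S} → {x // x ∈ S} := fun x => ⟨g x x.2, hgS x x.2⟩ with hG
  have key : ∀ (x : {x // x ∈ S}) (k : ℕ), ∃ c : ℝ, 0 < c ∧
      (T ^ k) (x : V) = c • ((G^[k] x : {x // x ∈ S}) : V) := by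
    intro x k
    induction k with
    | zero => exact ⟨1, one_pos, by simp⟩
    | succ k ih =>
      obtain ⟨c, hc, hck⟩ := ih
      set y := G^[k] x with hy
      refine ⟨c * l y y.2, mul_pos hc (hl y y.2), ?_⟩
      rw [Function.iterate_succ_apply', pow_succ', Module.End.mul_apply, hck, map_smul,
        hTl y y.2, smul_smul]
  have hfix : ∀ s ∈ S, T s = s := by
    intro s hs
    set x0 : {x // x ∈ S} := ⟨s, hs⟩ with hx0
    obtain ⟨a, b, hab, heqab⟩ := Finite.exists_ne_map_eq_of_infinite fun k : ℕ => G^[k] x0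
    have hex : ∃ i j : ℕ, i < j ∧ G^[i] x0 = G^[j] x0 := by
      rcases hab.lt_or_gt with hlt | hlt
      · exact ⟨a, b, hlt, heqab⟩
      · exact ⟨b, a, hlt, heqab.symm⟩
    obtain ⟨i, j, hlt, heq⟩ := hex
    obtain ⟨c, hc, hci⟩ := key x0 i
    obtain ⟨c', hc', hcj⟩ := key x0 j
    rw [← heq] at hcj
    set t : V := ↑(G^[i] x0) with ht
    have htS : t ∈ S := (G^[i] x0).2
    have htne : t ≠ 0 := fun h => hS0 (h ▸ htS)
    set m := j - i with hm
    have hm1 : 1 ≤ m := by omega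
    have him : i + m = j := by omega
    -- T^m t = (c⁻¹ * c') • t
    have hTmt : (T ^ m) t = (c⁻¹ * c') • t := by
      have h1 : (T ^ m) ((T ^ i) (s : V)) = (T ^ j) s := by
        rw [← Module.End.mul_apply, ← pow_add]
        rw [show m + i = j by omega]
      rw [hci, map_smul, hcj] at h1
      have := congrArg (fun w => c⁻¹ • w) h1
      simpa [smul_smul, inv_mul_cancel₀ (ne_of_gt hc)] using this
    -- eigenvalue of T^m on t is 1
    have heig : c⁻¹ * c' - 1 = 0 := by
      refine aux_eigen (T ^ m - 1) n (aux_nilp T n hN m) t htne _ ?_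
      rw [LinearMap.sub_apply, hTmt, Module.End.one_apply, sub_smul, one_smul]
    have hcc : c' = c := by
      have : c⁻¹ * c' = 1 := by linarith
      field_simp at this
      linarith
    -- hence T^m s = s
    have hTms : (T ^ m) s = s := by
      have h2 : (T ^ i) ((T ^ m) s) = (T ^ i) s := by
        rw [← Module.End.mul_apply, ← pow_add, show i + m = j from him, hcj, hcc, hci]
      have hinj : Function.Injective (T ^ i) := by
        rw [Module.End.coe_pow]
        exact Function.Injective.iterate hTbij.injective i
      exact hinj h2
    -- now deduce T s = s from nilpotency of T - 1
    set N : Module.End ℝ V := T - 1 with hNd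
    have hT1 : N + 1 = T := by rw [hNd]; abel
    obtain ⟨q, hq⟩ := aux_Xdvd m
    have hq0 : q.coeff 0 = (m : ℝ) := by
      have h3 : ((X + 1 : ℝ[X]) ^ m - 1).coeff 1 = (X * q).coeff 1 := by rw [hq]
      rw [coeff_X_mul] at h3
      rw [← h3]
      simp [coeff_X_add_one_pow, coeff_one]
    have hXq : (X : ℝ[X]) ∣ (q - C (m : ℝ)) := by
      rw [X_dvd_iff, coeff_sub, hq0, coeff_C_zero, sub_self]
    obtain ⟨h, hh⟩ := hXq
    have hqe : q = C (m : ℝ) + X * h := by rw [← hh]; ring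
    -- (T^m - 1) = m • N + N² h(N)
    have hpoly : (X + 1 : ℝ[X]) ^ m - 1 = C (m : ℝ) * X + (X * X) * h := by
      rw [hq, hqe]; ring
    have haevm : (aeval N) ((X + 1 : ℝ[X]) ^ m - 1) = T ^ m - 1 := by simp [hT1]
    have h4 : (m : ℝ) • N s + ((aeval N) ((X * X : ℝ[X]) * h)) s = 0 := by
      have h5 : (T ^ m - 1) s = 0 := by
        rw [LinearMap.sub_apply, hTms, Module.End.one_apply, sub_self]
      rw [← haevm, hpoly, map_add, map_mul, aeval_C, aeval_X, LinearMap.add_apply,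
        Module.End.mul_apply] at h5
      rw [← h5]
      congr 1
    have h6 : (m : ℝ) • N s = ((aeval N) ((X * X : ℝ[X]) * (-h))) s := by
      rw [mul_neg, map_neg, LinearMap.neg_apply]
      exact eq_neg_of_add_eq_zero_left h4
    have hNs : N s = 0 := by
      exact aux_key N (-h) n hN (m : ℝ) (Nat.cast_ne_zero.mpr (by omega)) s h6
    have : T s - s = 0 := by
      have := hNs
      rwa [hNd, LinearMap.sub_apply, Module.End.one_apply] at this
    exact sub_eq_zero.mp this
  exact LinearMap.ext_on hSspan fun x hx => hfix x hx
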